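/- Let m ≥ 1. For all natural numbers n and s, the Gaussian polynomial coefficient admits the Sylvester–Cayley decomposition (as an identity in ℤ): P_m^n(s) = Σ_{i=1}^{m} (−1)^{m−i} · W( n·i − s − (m−i)(m−i+1)/2 , d^{(i)} ⧺ d^{(m−i)} ), where d^{(j)} denotes the sequence (1,2,…,j) (empty for j = 0) and W of a negative argument is 0. -/

import Mathlib

open Finset

/-- `W t d` : the number of tuples `x` of nonnegative integers with `∑ i, d i * x i = t`. -/
noncomputable def W (t : ℤ) (d : List ℕ) : ℕ :=
  Nat.card {x : Fin d.length → ℕ // ∑ i, (d.get i : ℤ) * (x i : ℤ) = t}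

/-- `Wm j t` : the restricted partition function `W(t, (1,2,…,j))`. -/
noncomputable def Wm (j : ℕ) (t : ℤ) : ℕ :=
  W t ((List.range j).map (· + 1))

/-- `P m n s` : the Gaussian polynomial coefficient, i.e. the number of tuples
`(x_1,…,x_m)` of nonnegative integers with `∑ i, i * x_i = s` and `∑ i, x_i ≤ n`. -/
noncomputable def P (m n s : ℕ) : ℕ :=
  Nat.card {x : Fin m → ℕ // (∑ i : Fin m, ((i : ℕ) + 1) * x i = s) ∧ ∑ i, x i ≤ n}

/-- `tri j = j(j+1)/2`, the `j`-th triangular number. -/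
def tri (j : ℕ) : ℕ := j * (j + 1) / 2


open Finset PowerSeries

noncomputable def g (a : ℕ) : PowerSeries ℕ := PowerSeries.mk fun n => if a ∣ n then 1 else 0

noncomputable def WC (t : ℤ) (F : PowerSeries ℕ) : ℤ :=
  if 0 ≤ t then ((PowerSeries.coeff t.toNat F : ℕ) : ℤ) else 0

lemma g_eq (a : ℕ) (ha : 0 < a) : g a = 1 + X ^ a * g a := by
  ext n
  rw [map_add, PowerSeries.coeff_X_pow_mul']
  rcases Nat.eq_zero_or_pos n with rfl | hn
  · simp [g, PowerSeries.coeff_zero_eq_constantCoeff, ha.ne', Nat.not_succ_le_zero]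
  · rw [PowerSeries.coeff_one, if_neg hn.ne']
    simp only [g, PowerSeries.coeff_mk, zero_add]
    by_cases h : a ≤ n
    · rw [if_pos h]
      congr 1
      have : (a ∣ n) ↔ (a ∣ n - a) := by
        constructor
        · intro hd; exact (Nat.dvd_sub hd dvd_rfl)
        · intro hd; have := Nat.dvd_add hd (dvd_refl a); rwa [Nat.sub_add_cancel h] at this
      exact propext this
    · rw [if_neg h, if_neg (fun hd => h (Nat.le_of_dvd hn hd))]
      
lemma WC_neg {t : ℤ} (ht : t < 0) (F : PowerSeries ℕ) : WC t F = 0 := by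
  simp [WC, not_le.mpr ht]

lemma WC_one (t : ℤ) : WC t 1 = if t = 0 then 1 else 0 := by
  unfold WC
  rcases lt_or_ge t 0 with h | h
  · rw [if_neg (not_le.mpr h), if_neg h.ne]
  · rw [if_pos h, PowerSeries.coeff_one]
    by_cases h0 : t = 0
    · simp [h0]
    · rw [if_neg (by omega), if_neg h0]; simp

lemma WC_peel (a : ℕ) (ha : 0 < a) (F : PowerSeries ℕ) (t : ℤ) :
    WC t (g a * F) = WC (t - a) (g a * F) + WC t F := by
  rcases lt_or_ge t 0 with h | h
  · rw [WC_neg h, WC_neg (by omega), WC_neg h]; ring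
  · rw [WC, WC, WC, if_pos h]
    conv_lhs => rw [g_eq a ha]
    rw [add_mul, one_mul, map_add, mul_assoc, PowerSeries.coeff_X_pow_mul']
    by_cases h2 : (a : ℤ) ≤ t
    · rw [if_pos (by omega), if_pos (by omega), if_pos h]
      have : (t - a).toNat = t.toNat - a := by omega
      rw [this]
      push_cast
      ring
    · rw [if_neg (by omega), if_neg (by omega), if_pos h]
      simp




/-- generic splitting of a finite subtype card by a decidable predicate -/
lemma card_split {α : Type*} (P Q : α → Prop) [DecidablePred Q] [hf : Finite {x // P x}] :
    Nat.card {x // P x} =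
      Nat.card {x : α // P x ∧ Q x} + Nat.card {x : α // P x ∧ ¬ Q x} := by
  have h1 : Finite {x : α // P x ∧ Q x} :=
    Finite.of_injective (fun y => (⟨y.1, y.2.1⟩ : {x // P x}))
      (fun a b h => Subtype.ext (by simpa [Subtype.ext_iff] using h))
  have h2 : Finite {x : α // P x ∧ ¬ Q x} :=
    Finite.of_injective (fun y => (⟨y.1, y.2.1⟩ : {x // P x}))
      (fun a b h => Subtype.ext (by simpa [Subtype.ext_iff] using h))
  rw [← Nat.card_sum]
  apply Nat.card_congr
  exact {
    toFun := fun x => if h : Q x.1 then Sum.inl ⟨x.1, x.2, h⟩ else Sum.inr ⟨x.1, x.2, h⟩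
    invFun := Sum.elim (fun y => ⟨y.1, y.2.1⟩) (fun y => ⟨y.1, y.2.1⟩)
    left_inv := fun x => by by_cases h : Q x.1 <;> simp [h]
    right_inv := fun y => by
      rcases y with y | y
      · simp [y.2.2]
      · simp [y.2.2]
  }

lemma W_finite (d : List ℕ) (hd : ∀ a ∈ d, 0 < a) (t : ℤ) :
    Finite {x : Fin d.length → ℕ // ∑ i, (d.get i : ℤ) * (x i : ℤ) = t} := by
  apply Finite.of_injective (β := Fin d.length → Fin (t.toNat + 1))
    (f := fun x i => ⟨x.1 i, by
      have hx := x.2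
      have hbound : ((x.1 i : ℤ)) ≤ t := by
        calc (x.1 i : ℤ) ≤ (d.get i : ℤ) * x.1 i := by
              have : (1 : ℤ) ≤ d.get i := by exact_mod_cast hd _ (d.get_mem _)
              nlinarith [Int.ofNat_nonneg (x.1 i)]
          _ ≤ ∑ j, (d.get j : ℤ) * x.1 j := by
              apply Finset.single_le_sum (f := fun j => (d.get j : ℤ) * x.1 j)
              · intro j _; positivity
              · exact Finset.mem_univ i
          _ = t := hx
      omega⟩)
  intro a b h
  apply Subtype.ext; funext i
  exact congrArg Fin.val (congrFun h i)

lemma W_neg (t : ℤ) (ht : t < 0) (d : List ℕ) : W t d = 0 := by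
  rw [W, Nat.card_eq_zero]
  left
  constructor; rintro ⟨x, hx⟩
  have : (0:ℤ) ≤ ∑ i, (d.get i : ℤ) * (x i : ℤ) := by positivity
  omega

lemma W_nil (t : ℤ) : W t [] = if t = 0 then 1 else 0 := by
  rw [W]
  by_cases h : t = 0
  · rw [if_pos h]
    apply Nat.card_eq_one_iff_exists.mpr
    refine ⟨⟨fun i => i.elim0, by simp [h]⟩, ?_⟩
    rintro ⟨a, _⟩
    apply Subtype.ext; funext i; exact i.elim0
  · rw [if_neg h, Nat.card_eq_zero]
    left
    constructor; rintro ⟨x, hx⟩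
    simp at hx
    exact h hx.symm

lemma sum_cons_aux (a : ℕ) (d : List ℕ) (x : Fin (d.length + 1) → ℕ) :
    ∑ i : Fin (d.length + 1), (((a :: d).get i : ℕ) : ℤ) * (x i : ℤ)
      = (a : ℤ) * x 0 + ∑ i : Fin d.length, (d.get i : ℤ) * (x i.succ : ℤ) := by
  rw [Fin.sum_univ_succ]
  rfl

lemma W_cons (a : ℕ) (ha : 0 < a) (d : List ℕ) (hd : ∀ b ∈ d, 0 < b) (t : ℤ) :
    W t (a :: d) = W (t - a) (a :: d) + W t d := by
  have had : ∀ b ∈ (a :: d), 0 < b := by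
    intro b hb; rcases List.mem_cons.mp hb with rfl | h; exact ha; exact hd b h
  have hW : ∀ u : ℤ, W u (a :: d) = Nat.card {x : Fin (d.length + 1) → ℕ //
      ∑ i : Fin (d.length + 1), (((a :: d).get i : ℕ) : ℤ) * (x i : ℤ) = u} := fun u => rfl
  have hfin : Finite {x : Fin (d.length + 1) → ℕ //
      ∑ i : Fin (d.length + 1), (((a :: d).get i : ℕ) : ℤ) * (x i : ℤ) = t} :=
    W_finite (a :: d) had t
  rw [hW, hW, card_split _ (fun x => x 0 = 0)]
  have e1 : {x : Fin (d.length + 1) → ℕ //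
        (∑ i : Fin (d.length + 1), (((a :: d).get i : ℕ) : ℤ) * (x i : ℤ) = t) ∧ x 0 = 0}
      ≃ {y : Fin d.length → ℕ // ∑ i, (d.get i : ℤ) * (y i : ℤ) = t} := by
    refine ⟨fun x => ⟨fun i => x.1 i.succ, ?_⟩, fun y => ⟨Fin.cons 0 y.1, ?_, by simp⟩, ?_, ?_⟩
    · have h := x.2.1
      rw [sum_cons_aux] at h
      rw [x.2.2] at h
      simpa using h
    · rw [sum_cons_aux]
      simpa using y.2
    · rintro ⟨x, hx1, hx2⟩
      apply Subtype.ext; funext i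
      refine Fin.cases ?_ ?_ i
      · simpa using hx2.symm
      · intro j; simp
    · rintro ⟨y, hy⟩
      apply Subtype.ext; funext i
      simp
  have e2 : {x : Fin (d.length + 1) → ℕ //
        (∑ i : Fin (d.length + 1), (((a :: d).get i : ℕ) : ℤ) * (x i : ℤ) = t) ∧ ¬ x 0 = 0}
      ≃ {x : Fin (d.length + 1) → ℕ //
        ∑ i : Fin (d.length + 1), (((a :: d).get i : ℕ) : ℤ) * (x i : ℤ) = t - a} := by
    refine ⟨fun x => ⟨Fin.cons (x.1 0 - 1) (fun i => x.1 i.succ), ?_⟩,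
            fun x => ⟨Fin.cons (x.1 0 + 1) (fun i => x.1 i.succ), ?_, by simp⟩, ?_, ?_⟩
    · rw [sum_cons_aux]
      have h := x.2.1
      rw [sum_cons_aux] at h
      have h0 : x.1 0 ≠ 0 := x.2.2
      have hc : ((x.1 0 - 1 : ℕ) : ℤ) = (x.1 0 : ℤ) - 1 := by omega
      simp only [Fin.cons_zero, Fin.cons_succ, hc]
      linear_combination h
    · rw [sum_cons_aux]
      have h := x.2
      rw [sum_cons_aux] at h
      simp only [Fin.cons_zero, Fin.cons_succ]
      push_cast
      linear_combination h
    · rintro ⟨x, hx1, hx2⟩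
      apply Subtype.ext; funext i
      refine Fin.cases ?_ ?_ i
      · simp only [Fin.cons_zero]; omega
      · intro j; simp
    · rintro ⟨x, hx⟩
      apply Subtype.ext; funext i
      refine Fin.cases ?_ ?_ i
      · simp only [Fin.cons_zero]; omega
      · intro j; simp
  rw [Nat.card_congr e1, Nat.card_congr e2]
  rw [W, add_comm]

noncomputable def gfL (D : List ℕ) : PowerSeries ℕ := (D.map g).prod

@[simp] lemma gfL_nil : gfL [] = 1 := rfl

lemma gfL_cons (a : ℕ) (D : List ℕ) : gfL (a :: D) = g a * gfL D := by
  simp [gfL]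

lemma gfL_append (D1 D2 : List ℕ) : gfL (D1 ++ D2) = gfL D1 * gfL D2 := by
  simp [gfL]

lemma W_eq_WC (D : List ℕ) (hD : ∀ b ∈ D, 0 < b) (t : ℤ) : (W t D : ℤ) = WC t (gfL D) := by
  induction D generalizing t with
  | nil => rw [W_nil, gfL_nil, WC_one]; split <;> simp
  | cons a D ih =>
    have ha : 0 < a := hD a List.mem_cons_self
    have hD' : ∀ b ∈ D, 0 < b := fun b hb => hD b (List.mem_cons_of_mem a hb)
    rcases lt_or_ge t 0 with h | h
    · rw [W_neg t h, WC_neg h]; simp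
    · have key : ∀ N : ℕ, ∀ u : ℤ, u < N → (W u (a :: D) : ℤ) = WC u (gfL (a :: D)) := by
        intro N
        induction N with
        | zero => intro u hu; rw [W_neg u (by omega), WC_neg (by omega)]; simp
        | succ N ihN =>
          intro u hu
          rw [gfL_cons, WC_peel a ha _ u, W_cons a ha D hD' u, ← gfL_cons]
          push_cast
          rw [ihN (u - a) (by omega), ih hD' u]
      exact key (t.toNat + 1) t (by omega)


/-- generic splitting (copy) -/
lemma card_split' {α : Type*} (P Q : α → Prop) [DecidablePred Q] [hf : Finite {x // P x}] :
    Nat.card {x // P x} =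
      Nat.card {x : α // P x ∧ Q x} + Nat.card {x : α // P x ∧ ¬ Q x} := by
  have h1 : Finite {x : α // P x ∧ Q x} :=
    Finite.of_injective (fun y => (⟨y.1, y.2.1⟩ : {x // P x}))
      (fun a b h => Subtype.ext (by simpa [Subtype.ext_iff] using h))
  have h2 : Finite {x : α // P x ∧ ¬ Q x} :=
    Finite.of_injective (fun y => (⟨y.1, y.2.1⟩ : {x // P x}))
      (fun a b h => Subtype.ext (by simpa [Subtype.ext_iff] using h))
  rw [← Nat.card_sum]
  apply Nat.card_congr
  exact {
    toFun := fun x => if h : Q x.1 then Sum.inl ⟨x.1, x.2, h⟩ else Sum.inr ⟨x.1, x.2, h⟩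
    invFun := Sum.elim (fun y => ⟨y.1, y.2.1⟩) (fun y => ⟨y.1, y.2.1⟩)
    left_inv := fun x => by by_cases h : Q x.1 <;> simp [h]
    right_inv := fun y => by
      rcases y with y | y
      · simp [y.2.2]
      · simp [y.2.2]
  }

noncomputable def PZ (m n : ℕ) (s : ℤ) : ℕ :=
  Nat.card {x : Fin m → ℕ // (∑ i : Fin m, ((i : ℕ) + 1 : ℤ) * x i = s) ∧ ∑ i, x i ≤ n}

lemma P_eq_PZ (m n s : ℕ) : P m n s = PZ m n s := by
  rw [P, PZ]
  apply Nat.card_congr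
  apply Equiv.subtypeEquivRight
  intro x
  constructor
  · rintro ⟨h1, h2⟩; exact ⟨by exact_mod_cast h1, h2⟩
  · rintro ⟨h1, h2⟩; exact ⟨by exact_mod_cast h1, h2⟩

lemma PZ_neg (m n : ℕ) (s : ℤ) (hs : s < 0) : PZ m n s = 0 := by
  rw [PZ, Nat.card_eq_zero]
  left
  constructor; rintro ⟨x, hx1, hx2⟩
  have : (0:ℤ) ≤ ∑ i : Fin m, ((i : ℕ) + 1 : ℤ) * x i := by positivity
  omega

lemma PZ_finite (m n : ℕ) (s : ℤ) :
    Finite {x : Fin m → ℕ // (∑ i : Fin m, ((i : ℕ) + 1 : ℤ) * x i = s) ∧ ∑ i, x i ≤ n} := by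
  apply Finite.of_injective (β := Fin m → Fin (n + 1))
    (f := fun x i => ⟨x.1 i, by
      have hb : x.1 i ≤ n := le_trans (Finset.single_le_sum (f := fun j => x.1 j)
        (fun j _ => Nat.zero_le _) (Finset.mem_univ i)) x.2.2
      omega⟩)
  intro a b h
  apply Subtype.ext; funext i
  exact congrArg Fin.val (congrFun h i)

lemma PZ_zero_m (n : ℕ) (s : ℤ) : PZ 0 n s = if s = 0 then 1 else 0 := by
  rw [PZ]
  by_cases h : s = 0
  · rw [if_pos h]
    apply Nat.card_eq_one_iff_exists.mpr
    refine ⟨⟨fun i => i.elim0, by simp [h]⟩, ?_⟩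
    rintro ⟨x, _⟩
    apply Subtype.ext; funext i; exact i.elim0
  · rw [if_neg h, Nat.card_eq_zero]
    left
    constructor; rintro ⟨x, hx1, _⟩
    simp at hx1
    exact h hx1.symm

lemma PZ_zero_n (m : ℕ) (s : ℤ) : PZ m 0 s = if s = 0 then 1 else 0 := by
  rw [PZ]
  by_cases h : s = 0
  · rw [if_pos h]
    apply Nat.card_eq_one_iff_exists.mpr
    refine ⟨⟨fun _ => 0, by simp [h]⟩, ?_⟩
    rintro ⟨x, hx1, hx2⟩
    apply Subtype.ext; funext i
    have := Nat.le_zero.mp hx2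
    have hz := (Finset.sum_eq_zero_iff.mp this) i (Finset.mem_univ i)
    simpa using hz
  · rw [if_neg h, Nat.card_eq_zero]
    left
    constructor; rintro ⟨x, hx1, hx2⟩
    have := Nat.le_zero.mp hx2
    apply h
    rw [← hx1]
    apply Finset.sum_eq_zero
    intro i _
    have hz := (Finset.sum_eq_zero_iff.mp this) i (Finset.mem_univ i)
    simp [hz]

lemma psum_aux (m : ℕ) (x : Fin (m + 1) → ℕ) :
    ∑ i : Fin (m + 1), ((i : ℕ) + 1 : ℤ) * x i
      = (∑ i : Fin m, ((i : ℕ) + 1 : ℤ) * x i.castSucc) + ((m : ℤ) + 1) * x (Fin.last m) := by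
  rw [Fin.sum_univ_castSucc]
  simp

lemma psum_aux2 (m : ℕ) (x : Fin (m + 1) → ℕ) :
    ∑ i : Fin (m + 1), x i = (∑ i : Fin m, x i.castSucc) + x (Fin.last m) := by
  rw [Fin.sum_univ_castSucc]

lemma PZ_rec (m n : ℕ) (s : ℤ) :
    PZ (m + 1) (n + 1) s = PZ m (n + 1) s + PZ (m + 1) n (s - (m + 1)) := by
  have hfin := PZ_finite (m + 1) (n + 1) s
  rw [PZ, card_split' _ (fun x => x (Fin.last m) = 0)]
  congr 1
  · apply Nat.card_congr
    refine ⟨fun x => ⟨fun i => x.1 i.castSucc, ?_, ?_⟩,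
            fun y => ⟨Fin.snoc y.1 0, ⟨?_, ?_⟩, by simp⟩, ?_, ?_⟩
    · have h := x.2.1.1
      rw [psum_aux] at h
      rw [x.2.2] at h
      simpa using h
    · have h := x.2.1.2
      rw [psum_aux2] at h
      rw [x.2.2] at h
      simpa using h
    · rw [psum_aux]
      simpa using y.2.1
    · rw [psum_aux2]
      simpa using y.2.2
    · rintro ⟨x, ⟨hx1, hx2⟩, hx3⟩
      apply Subtype.ext; funext i
      refine Fin.lastCases ?_ ?_ i
      · simpa using hx3.symm
      · intro j; simp
    · rintro ⟨y, hy⟩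
      apply Subtype.ext; funext i
      simp
  · apply Nat.card_congr
    refine ⟨fun x => ⟨Fin.snoc (fun i => x.1 i.castSucc) (x.1 (Fin.last m) - 1), ?_, ?_⟩,
            fun x => ⟨Fin.snoc (fun i => x.1 i.castSucc) (x.1 (Fin.last m) + 1),
              ⟨?_, ?_⟩, by simp⟩, ?_, ?_⟩
    · rw [psum_aux]
      obtain ⟨⟨hx1, hx2⟩, hx3⟩ := x.2
      rw [psum_aux] at hx1
      have h0 : x.1 (Fin.last m) ≠ 0 := hx3
      have hc : ((x.1 (Fin.last m) - 1 : ℕ) : ℤ) = (x.1 (Fin.last m) : ℤ) - 1 := by omega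
      simp only [Fin.snoc_castSucc, Fin.snoc_last, hc]
      linear_combination hx1
    · rw [psum_aux2]
      obtain ⟨⟨hx1, hx2⟩, hx3⟩ := x.2
      rw [psum_aux2] at hx2
      simp only [Fin.snoc_castSucc, Fin.snoc_last]
      have h0 : x.1 (Fin.last m) ≠ 0 := hx3
      omega
    · rw [psum_aux]
      obtain ⟨hx1, hx2⟩ := x.2
      rw [psum_aux] at hx1
      simp only [Fin.snoc_castSucc, Fin.snoc_last]
      push_cast
      linear_combination hx1
    · rw [psum_aux2]
      obtain ⟨hx1, hx2⟩ := x.2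
      rw [psum_aux2] at hx2
      simp only [Fin.snoc_castSucc, Fin.snoc_last]
      omega
    · rintro ⟨x, ⟨hx1, hx2⟩, hx3⟩
      apply Subtype.ext; funext i
      refine Fin.lastCases ?_ ?_ i
      · simp only [Fin.snoc_last]
        have h0 : x (Fin.last m) ≠ 0 := hx3
        omega
      · intro j; simp
    · rintro ⟨x, hx1, hx2⟩
      apply Subtype.ext; funext i
      refine Fin.lastCases ?_ ?_ i
      · simp only [Fin.snoc_last]
        omega
      · intro j; simp


lemma tri_zero : tri 0 = 0 := rfl

lemma two_tri (j : ℕ) : 2 * tri j = j * (j + 1) := by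
  rw [tri, Nat.two_mul_div_two_of_even]
  exact Nat.even_mul_succ_self j

lemma tri_succ (j : ℕ) : tri (j + 1) = tri j + (j + 1) := by
  have h1 := two_tri j
  have h2 := two_tri (j + 1)
  have h3 : (j + 1) * (j + 2) = j * (j + 1) + 2 * (j + 1) := by ring
  linarith

noncomputable def Phi (j : ℕ) : PowerSeries ℕ := gfL ((List.range j).map (· + 1))

lemma Phi_zero : Phi 0 = 1 := rfl

lemma Phi_succ (j : ℕ) : Phi (j + 1) = Phi j * g (j + 1) := by
  rw [Phi, Phi, List.range_succ, List.map_append, gfL_append]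
  simp [gfL]

noncomputable def A (m n : ℕ) (s : ℤ) : ℤ :=
  ∑ i ∈ Finset.range (m + 1), (-1 : ℤ) ^ (m - i) *
    WC ((n : ℤ) * i - s - (tri (m - i) : ℤ)) (Phi i * Phi (m - i))

lemma A_R1 (m n : ℕ) (s : ℤ) :
    A (m + 1) (n + 1) s = A m (n + 1) s + A (m + 1) n (s - (m + 1)) := by
  have main : A (m + 1) (n + 1) s - A (m + 1) n (s - (m + 1)) = A m (n + 1) s := by
    rw [A, A, A, ← Finset.sum_sub_distrib, Finset.sum_range_succ]
    have hzero : ((-1 : ℤ)) ^ (m + 1 - (m + 1)) *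
          WC (((n + 1 : ℕ) : ℤ) * ((m + 1 : ℕ) : ℤ) - s - (tri (m + 1 - (m + 1)) : ℤ))
            (Phi (m + 1) * Phi (m + 1 - (m + 1)))
        - ((-1 : ℤ)) ^ (m + 1 - (m + 1)) *
          WC ((n : ℤ) * ((m + 1 : ℕ) : ℤ) - (s - ((m : ℤ) + 1)) - (tri (m + 1 - (m + 1)) : ℤ))
            (Phi (m + 1) * Phi (m + 1 - (m + 1))) = 0 := by
      rw [sub_eq_zero]
      congr 2
      push_cast
      ring
    rw [show (m + 1 : ℕ) - (m + 1) = 0 from Nat.sub_self _] at hzero ⊢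
    rw [hzero, add_zero]
    apply Finset.sum_congr rfl
    intro i hi
    have him : i ≤ m := by simpa [Nat.lt_succ_iff] using hi
    have h1 : m + 1 - i = (m - i) + 1 := by omega
    rw [h1]
    rw [Phi_succ (m - i)]
    rw [show Phi i * (Phi (m - i) * g (m - i + 1)) = g (m - i + 1) * (Phi i * Phi (m - i)) from by
      ring]
    set u : ℤ := (n : ℤ) * i - (s - ((m : ℤ) + 1)) - (tri (m - i + 1) : ℤ) with hu
    have hp := WC_peel (m - i + 1) (by omega) (Phi i * Phi (m - i)) u
    have htri' : ((tri (m - i + 1) : ℕ) : ℤ) = (tri (m - i) : ℤ) + ((m - i : ℕ) : ℤ) + 1 := by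
      have h := tri_succ (m - i)
      push_cast [h]
      ring
    have hmi : ((m - i : ℕ) : ℤ) = (m : ℤ) - i := by omega
    have e1 : ((n + 1 : ℕ) : ℤ) * i - s - (tri (m - i + 1) : ℤ) = u - ((m - i + 1 : ℕ) : ℤ) := by
      rw [hu]
      push_cast [htri', hmi]
      ring
    have e2 : ((n + 1 : ℕ) : ℤ) * i - s - (tri (m - i) : ℤ) = u := by
      rw [hu]
      push_cast [htri', hmi]
      ring
    rw [e1, e2]
    linear_combination ((-1 : ℤ)) ^ (m - i) * hp
  linarith [main]

noncomputable def B (m : ℕ) (t : ℤ) : ℤ :=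
  ∑ i ∈ Finset.range (m + 1), (-1 : ℤ) ^ (m - i) *
    WC (t - (tri (m - i) : ℤ)) (Phi i * Phi (m - i))

lemma B_neg (m : ℕ) (t : ℤ) (ht : t < 0) : B m t = 0 := by
  rw [B]
  apply Finset.sum_eq_zero
  intro i _
  rw [WC_neg (by have := Int.ofNat_nonneg (tri (m - i)); omega), mul_zero]

lemma B_step (m : ℕ) (t : ℤ) :
    B (m + 1) t - B m t = B (m + 1) (t - (m + 1)) - B m (t - (m + 1)) := by
  have claim1 : B (m + 1) t - (∑ i ∈ Finset.range (m + 2), (-1 : ℤ) ^ (m + 1 - i) *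
      WC (t - (i : ℤ) - (tri (m + 1 - i) : ℤ)) (Phi i * Phi (m + 1 - i))) = B m t := by
    rw [B, B, ← Finset.sum_sub_distrib, Finset.sum_range_succ']
    have h0 : ((-1 : ℤ)) ^ (m + 1 - 0) * WC (t - (tri (m + 1 - 0) : ℤ)) (Phi 0 * Phi (m + 1 - 0))
        - ((-1 : ℤ)) ^ (m + 1 - 0) * WC (t - ((0 : ℕ) : ℤ) - (tri (m + 1 - 0) : ℤ))
          (Phi 0 * Phi (m + 1 - 0)) = 0 := by
      rw [sub_eq_zero]
      congr 2
      push_cast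
      ring
    rw [h0, add_zero]
    apply Finset.sum_congr rfl
    intro i hi
    have him : i ≤ m := by simpa [Nat.lt_succ_iff] using hi
    simp only [Nat.succ_sub_succ]
    rw [Phi_succ i]
    rw [show Phi i * g (i + 1) * Phi (m - i) = g (i + 1) * (Phi i * Phi (m - i)) from by ring]
    have hp := WC_peel (i + 1) (by omega) (Phi i * Phi (m - i)) (t - (tri (m - i) : ℤ))
    rw [show t - ((i + 1 : ℕ) : ℤ) - (tri (m - i) : ℤ)
        = t - (tri (m - i) : ℤ) - ((i + 1 : ℕ) : ℤ) from by ring]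
    linear_combination ((-1 : ℤ)) ^ (m - i) * hp
  have claim2 : (∑ i ∈ Finset.range (m + 2), (-1 : ℤ) ^ (m + 1 - i) *
      WC (t - (i : ℤ) - (tri (m + 1 - i) : ℤ)) (Phi i * Phi (m + 1 - i)))
      - B (m + 1) (t - (m + 1)) = - B m (t - (m + 1)) := by
    rw [B, B, ← Finset.sum_sub_distrib, Finset.sum_range_succ]
    have h0 : ((-1 : ℤ)) ^ (m + 1 - (m + 1)) *
        WC (t - ((m + 1 : ℕ) : ℤ) - (tri (m + 1 - (m + 1)) : ℤ))
          (Phi (m + 1) * Phi (m + 1 - (m + 1)))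
        - ((-1 : ℤ)) ^ (m + 1 - (m + 1)) *
        WC (t - ((m : ℤ) + 1) - (tri (m + 1 - (m + 1)) : ℤ))
          (Phi (m + 1) * Phi (m + 1 - (m + 1))) = 0 := by
      rw [show t - ((m + 1 : ℕ) : ℤ) = t - ((m : ℤ) + 1) from by push_cast; ring, sub_self]
    rw [h0, add_zero, ← Finset.sum_neg_distrib]
    apply Finset.sum_congr rfl
    intro i hi
    have him : i ≤ m := by simpa [Nat.lt_succ_iff] using hi
    have h1 : m + 1 - i = (m - i) + 1 := by omega
    rw [h1]
    rw [Phi_succ (m - i)]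
    rw [show Phi i * (Phi (m - i) * g (m - i + 1)) = g (m - i + 1) * (Phi i * Phi (m - i)) from by
      ring]
    set v : ℤ := t - (i : ℤ) - (tri (m - i + 1) : ℤ) with hv
    have hp := WC_peel (m - i + 1) (by omega) (Phi i * Phi (m - i)) v
    have htri' : ((tri (m - i + 1) : ℕ) : ℤ) = (tri (m - i) : ℤ) + ((m - i : ℕ) : ℤ) + 1 := by
      have h := tri_succ (m - i)
      push_cast [h]
      ring
    have hmi : ((m - i : ℕ) : ℤ) = (m : ℤ) - i := by omega
    have e1 : t - ((m : ℤ) + 1) - (tri (m - i + 1) : ℤ) = v - ((m - i + 1 : ℕ) : ℤ) := by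
      rw [hv]
      push_cast [hmi]
      ring
    have e2 : t - ((m : ℤ) + 1) - (tri (m - i) : ℤ) = v := by
      rw [hv]
      push_cast [htri', hmi]
      ring
    rw [e1, e2]
    linear_combination ((-1 : ℤ)) ^ (m - i + 1) * hp
  linarith [claim1, claim2]

lemma B_eq (m : ℕ) (t : ℤ) : B m t = if t = 0 then 1 else 0 := by
  induction m generalizing t with
  | zero =>
    rw [B, Finset.sum_range_one]
    simp only [Nat.sub_self, tri_zero, pow_zero, Nat.cast_zero, sub_zero, one_mul,
      Phi_zero, mul_one]
    exact WC_one t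
  | succ m ih =>
    have key : ∀ N : ℕ, ∀ u : ℤ, u < N → B (m + 1) u = B m u := by
      intro N
      induction N with
      | zero => intro u hu; rw [B_neg _ _ (by omega), B_neg _ _ (by omega)]
      | succ N ihN =>
        intro u hu
        have hs := B_step m u
        have h2 := ihN (u - (m + 1)) (by omega)
        linarith [hs, h2]
    rw [key (t.toNat + 1) t (by omega), ih]

lemma A_n_zero (m : ℕ) (s : ℤ) : A m 0 s = if s = 0 then 1 else 0 := by
  have h : A m 0 s = B m (-s) := by
    rw [A, B]
    apply Finset.sum_congr rfl
    intro i _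
    congr 2
    push_cast
    ring
  rw [h, B_eq]
  simp [neg_eq_zero]

lemma A_m_zero (n : ℕ) (s : ℤ) : A 0 n s = if s = 0 then 1 else 0 := by
  rw [A, Finset.sum_range_one]
  simp only [Nat.sub_self, tri_zero, pow_zero, Nat.cast_zero, one_mul, Phi_zero, mul_one,
    mul_zero, zero_sub]
  rw [show -s - 0 = -s from by ring, WC_one]
  simp [neg_eq_zero]

lemma main_ind : ∀ n m : ℕ, ∀ s : ℤ, (PZ m n s : ℤ) = A m n s := by
  intro n
  induction n with
  | zero =>
    intro m s
    rw [PZ_zero_n, A_n_zero]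
    split <;> simp
  | succ n ihn =>
    intro m
    induction m with
    | zero =>
      intro s
      rw [PZ_zero_m, A_m_zero]
      split <;> simp
    | succ m ihm =>
      intro s
      rw [A_R1, ← ihm s, ← ihn (m + 1) (s - ((m : ℤ) + 1)), PZ_rec]
      push_cast
      ring

lemma tri_pos (m : ℕ) (hm : 1 ≤ m) : 1 ≤ tri m := by
  obtain ⟨k, rfl⟩ : ∃ k, m = k + 1 := ⟨m - 1, by omega⟩
  rw [tri_succ]
  omega

/-- Sylvester–Cayley decomposition of the Gaussian polynomial coefficient:
`P_m^n(s) = Σ_{i=1}^{m} (−1)^{m−i} W(n i − s − (m−i)(m−i+1)/2, d^{(i)} ⧺ d^{(m−i)})`. -/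
theorem gaussian_sylvester_cayley (m : ℕ) (hm : 1 ≤ m) (n s : ℕ) :
    (P m n s : ℤ) =
      ∑ i ∈ Finset.Icc 1 m, (-1 : ℤ) ^ (m - i) *
        (W ((n : ℤ) * (i : ℤ) - (s : ℤ) - (tri (m - i) : ℤ))
          (((List.range i).map (· + 1)) ++ ((List.range (m - i)).map (· + 1))) : ℤ) := by
  have h1 : (P m n s : ℤ) = A m n (s : ℤ) := by
    rw [P_eq_PZ]
    exact main_ind n m (s : ℤ)
  rw [h1, A, Finset.sum_range_succ']
  have hneg : ((n : ℤ) * ((0 : ℕ) : ℤ) - (s : ℤ) - (tri (m - 0) : ℤ)) < 0 := by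
    have h2 := tri_pos m hm
    have h3 : (0 : ℤ) ≤ (s : ℤ) := Int.ofNat_nonneg s
    rw [Nat.sub_zero]
    push_cast
    omega
  rw [WC_neg hneg, mul_zero, add_zero]
  refine Finset.sum_bij' (fun (k : ℕ) (_ : k ∈ Finset.range m) => k + 1)
    (fun (j : ℕ) (_ : j ∈ Finset.Icc 1 m) => j - 1) ?_ ?_ ?_ ?_ ?_
  · intro a ha
    simp only [Finset.mem_range] at ha
    simp only [Finset.mem_Icc]
    omega
  · intro a ha
    simp only [Finset.mem_Icc] at ha
    simp only [Finset.mem_range]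
    omega
  · intro a ha
    simp
  · intro a ha
    simp only [Finset.mem_Icc] at ha
    show a - 1 + 1 = a
    omega
  · intro i hi
    have hb : ∀ b ∈ ((List.range (i + 1)).map (· + 1)) ++ ((List.range (m - (i + 1))).map (· + 1)),
        0 < b := by
      intro b hbb
      simp only [List.mem_append, List.mem_map, List.mem_range] at hbb
      rcases hbb with ⟨c, _, rfl⟩ | ⟨c, _, rfl⟩ <;> omega
    rw [W_eq_WC _ hb, gfL_append]
    rfl
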